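/- With G as in the weighted-satisfiability gadget (vertices X_i, ¬X_i, Y_{i,1}, Y_{i,2}, Z_i and edges (X_i,¬X_i), (X_i,Y_{i,1}), (X_i,Y_{i,2}), (¬X_i,Z_i)): for an ℓ-tuple b = (b₁,...,b_ℓ) of vertices with all b_j of the form X_{t_j}, pairwise distinct, define the assignment β_b : {X₁,...,X_n} → {0,1} by β_b(X_t) = 1 iff X_t appears among b₁,...,b_ℓ. Then for a literal L (either X_t or ¬X_t), β_b satisfies L if and only if: (L = X_t and the vertex X_t equals some b_j) or (L = ¬X_t and the vertex ¬X_t is not adjacent in G to any b_j). Consequently, Φ has a satisfying assignment of weight exactly ℓ if and only if there exists such a tuple b making, for every clause i, at least one of its two literal-vertices satisfy the above condition. -/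

import Mathlib

/-- Vertices of the gadget graph of the W[1]-hardness reduction. -/
inductive Vtx (n : ℕ) where
  | pos (i : Fin n)
  | neg (i : Fin n)
  | y (i : Fin n) (j : Fin 2)
  | z (i : Fin n)
  deriving DecidableEq

/-- The base relation of the gadget graph: edges `(Xᵢ, ¬Xᵢ)`, `(Xᵢ, Y_{i,j})`, `(¬Xᵢ, Zᵢ)`. -/
def gadgetRel {n : ℕ} : Vtx n → Vtx n → Prop
  | .pos i, .neg i' => i = i'
  | .pos i, .y i' _ => i = i'
  | .neg i, .z i' => i = i'
  | _, _ => False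

/-- The gadget graph of the W[1]-hardness reduction. -/
def gadgetGraph (n : ℕ) : SimpleGraph (Vtx n) :=
  SimpleGraph.fromRel gadgetRel

/-- A literal is a pair `(pol, t)`: the literal `X_t` if `pol = true`, `¬X_t` otherwise.
`β` satisfies the literal iff `β t = pol`. -/
def satLit {n : ℕ} (β : Fin n → Bool) (L : Bool × Fin n) : Prop := β L.2 = L.1

/-- The assignment `β_b` induced by a tuple `b` of variable indices. -/
def betaOf {ℓ n : ℕ} (b : Fin ℓ → Fin n) : Fin n → Bool :=
  fun t => decide (∃ j, b j = t)

/-- The weight of an assignment: the number of variables set to 1. -/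
def weight {n : ℕ} (β : Fin n → Bool) : ℕ :=
  (Finset.univ.filter (fun t => β t = true)).card

/-- The condition on the tuple `b` expressed in terms of the gadget graph: either the
literal is positive and its vertex equals some `b_j`-vertex, or it is negative and its
vertex `¬X_t` is not adjacent to any vertex `X_{b_j}`. -/
def condOf {ℓ n : ℕ} (b : Fin ℓ → Fin n) (L : Bool × Fin n) : Prop :=
  (L.1 = true ∧ ∃ j, (Vtx.pos L.2 : Vtx n) = Vtx.pos (b j)) ∨
  (L.1 = false ∧ ∀ j, ¬ (gadgetGraph n).Adj (Vtx.neg L.2) (Vtx.pos (b j)))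


lemma adj_neg_pos {n : ℕ} (t s : Fin n) :
    (gadgetGraph n).Adj (Vtx.neg t) (Vtx.pos s) ↔ s = t := by
  simp [gadgetGraph, SimpleGraph.fromRel_adj, gadgetRel]

lemma satLit_iff_condOf {n ℓ : ℕ} (b : Fin ℓ → Fin n) (L : Bool × Fin n) :
    satLit (betaOf b) L ↔ condOf b L := by
  obtain ⟨p, t⟩ := L
  cases p with
  | true => simp [satLit, betaOf, condOf, eq_comm]
  | false =>
      simp only [satLit, betaOf, condOf]
      simp [adj_neg_pos, decide_eq_false_iff_not, eq_comm]

lemma betaOf_of_weight {n : ℕ} (β : Fin n → Bool) {ℓ : ℕ} (hw : weight β = ℓ) :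
    ∃ b : Fin ℓ → Fin n, Function.Injective b ∧ betaOf b = β := by
  classical
  set S := Finset.univ.filter (fun t => β t = true) with hS
  have hcard : S.card = ℓ := hw
  refine ⟨fun j => (S.orderIsoOfFin hcard j : Fin n), ?_, ?_⟩
  · intro a b hab
    exact (S.orderIsoOfFin hcard).injective (Subtype.ext hab)
  · funext t
    have h1 : (∃ j, ((S.orderIsoOfFin hcard j : Fin n)) = t) ↔ t ∈ S := by
      constructor
      · rintro ⟨j, rfl⟩; exact (S.orderIsoOfFin hcard j).2
      · intro ht
        exact ⟨(S.orderIsoOfFin hcard).symm ⟨t, ht⟩, by simp⟩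
    have h2 : t ∈ S ↔ β t = true := by simp [hS]
    by_cases hb : β t = true
    · have h3 := (h1.trans h2).mpr hb
      rw [hb]
      exact decide_eq_true h3
    · simp only [Bool.not_eq_true] at hb
      simp [betaOf, hb]
      refine decide_eq_false (not_exists.mpr ?_)
      intro j hj
      have := h1.mp ⟨j, hj⟩
      rw [h2] at this; simp [hb] at this

lemma weight_betaOf {n ℓ : ℕ} (b : Fin ℓ → Fin n) (hb : Function.Injective b) :
    weight (betaOf b) = ℓ := by
  classical
  have : Finset.univ.filter (fun t => betaOf b t = true) = Finset.univ.image b := by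
    ext t
    simp [betaOf, eq_comm]
  rw [weight, this, Finset.card_image_of_injective _ hb, Finset.card_univ, Fintype.card_fin]

/-- correctness of the reduction from WSat(2-CNF). For a pairwise
distinct tuple `b` of variable indices, `β_b` satisfies a literal `L` iff the
graph-theoretic condition `condOf b L` holds; and the 2-CNF formula with clauses `C` has
a satisfying assignment of weight exactly `ℓ` iff some injective tuple `b` makes, for
every clause, at least one of its two literals satisfy that condition. -/
theorem stmt_12 (n m ℓ : ℕ) (C : Fin m → (Bool × Fin n) × (Bool × Fin n)) :
    (∀ b : Fin ℓ → Fin n, Function.Injective b →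
      ∀ L : Bool × Fin n, satLit (betaOf b) L ↔ condOf b L) ∧
    ((∃ β : Fin n → Bool, weight β = ℓ ∧
        ∀ i, satLit β (C i).1 ∨ satLit β (C i).2) ↔
      (∃ b : Fin ℓ → Fin n, Function.Injective b ∧
        ∀ i, condOf b (C i).1 ∨ condOf b (C i).2)) := by
  constructor
  · intro b _ L; exact satLit_iff_condOf b L
  · constructor
    · rintro ⟨β, hw, hc⟩
      obtain ⟨b, hbinj, hbeq⟩ := betaOf_of_weight β hw
      refine ⟨b, hbinj, fun i => ?_⟩
      rcases hc i with h | h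
      · exact Or.inl ((satLit_iff_condOf b _).mp (by rw [hbeq]; exact h))
      · exact Or.inr ((satLit_iff_condOf b _).mp (by rw [hbeq]; exact h))
    · rintro ⟨b, hbinj, hc⟩
      refine ⟨betaOf b, weight_betaOf b hbinj, fun i => ?_⟩
      rcases hc i with h | h
      · exact Or.inl ((satLit_iff_condOf b _).mpr h)
      · exact Or.inr ((satLit_iff_condOf b _).mpr h)
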